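/- Suppose σ_b = 0 and x, x' ∈ ℝ^d are nonzero. Then for every ℓ ≥ 0: K^(ℓ)(x,x') = ‖x‖·‖x'‖·ρ^ℓ( ⟨x,x'⟩ / (‖x‖·‖x'‖) ), where ρ^ℓ is the ℓ-fold iterate of ρ; consequently ‖x‖·‖x'‖·ρ^ℓ(−1) ≤ K^(ℓ)(x,x') ≤ ‖x‖·‖x'‖·ρ^ℓ(1) = ‖x‖·‖x'‖. -/

import Mathlib

open Real

/-- The dual activation function of the scaled ReLU `φ(t) = √2·max(t,0)`. -/
noncomputable def rho (r : ℝ) : ℝ :=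
  (1 / π) * (Real.sqrt (1 - r ^ 2) + (π - Real.arccos r) * r)

/-- The dual activation function of the derivative of the scaled ReLU. -/
noncomputable def rhoPrime (r : ℝ) : ℝ := (π - Real.arccos r) / π

/-- The depth-`ℓ` NNGP kernel `K^(ℓ)` of a ReLU network with bias variance `σb²`,
defined recursively by `K^(0)(v,w) = ⟪v,w⟫` and
`K^(ℓ)(v,w) = √(K^(ℓ−1)(v,v)·K^(ℓ−1)(w,w))·ρ(K^(ℓ−1)(v,w)/√(K^(ℓ−1)(v,v)·K^(ℓ−1)(w,w))) + σb²`. -/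
noncomputable def Kker (σb : ℝ) {d : ℕ} :
    ℕ → EuclideanSpace ℝ (Fin d) → EuclideanSpace ℝ (Fin d) → ℝ
  | 0, v, w => (inner ℝ v w : ℝ)
  | ℓ + 1, v, w =>
      Real.sqrt (Kker σb ℓ v v * Kker σb ℓ w w) *
        rho (Kker σb ℓ v w / Real.sqrt (Kker σb ℓ v v * Kker σb ℓ w w)) + σb ^ 2

/-- `u^(ℓ) = (‖x‖² + ℓσ_b²)·(‖x'‖² + ℓσ_b²)`, stated for the norms `a = ‖x‖`, `b = ‖x'‖`. -/
noncomputable def uFun (σb a b : ℝ) (ℓ : ℕ) : ℝ :=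
  (a ^ 2 + ℓ * σb ^ 2) * (b ^ 2 + ℓ * σb ^ 2)

lemma rho_one : rho 1 = 1 := by
  simp [rho, Real.arccos_one]

lemma rho_neg_one : rho (-1) = 0 := by
  simp [rho, Real.arccos_neg_one]

lemma rho_hasDerivAt {r : ℝ} (h1 : -1 < r) (h2 : r < 1) :
    HasDerivAt rho ((1/π) * (π - Real.arccos r)) r := by
  have hr1 : r ≠ 1 := ne_of_lt h2
  have hrm : r ≠ -1 := ne_of_gt h1
  have hpos : 0 < 1 - r ^ 2 := by nlinarith
  have hs : Real.sqrt (1 - r ^ 2) ≠ 0 := by positivity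
  have hsq : HasDerivAt (fun t : ℝ => Real.sqrt (1 - t ^ 2))
      ((1 / (2 * Real.sqrt (1 - r ^ 2))) * (-(2 * r))) r := by
    have hinner : HasDerivAt (fun t : ℝ => 1 - t ^ 2) (-(2 * r)) r := by
      simpa using ((hasDerivAt_pow 2 r).const_sub 1)
    exact (Real.hasDerivAt_sqrt (ne_of_gt hpos)).comp r hinner
  have hac : HasDerivAt (fun t : ℝ => (π - Real.arccos t) * t)
      ((1 / Real.sqrt (1 - r ^ 2)) * r + (π - Real.arccos r)) r := by
    have h1' : HasDerivAt (fun t : ℝ => π - Real.arccos t)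
        (1 / Real.sqrt (1 - r ^ 2)) r := by
      simpa using (Real.hasDerivAt_arccos hrm hr1).const_sub π
    simpa using h1'.fun_mul (hasDerivAt_id' r)
  have := (hsq.fun_add hac).const_mul (1/π)
  convert! this using 1
  have : (1 / (2 * Real.sqrt (1 - r ^ 2))) * (-(2 * r)) = -(r / Real.sqrt (1 - r ^ 2)) := by
    field_simp
  rw [this]
  have hss : Real.sqrt (1 - r ^ 2) * Real.sqrt (1 - r ^ 2) = 1 - r ^ 2 :=
    Real.mul_self_sqrt hpos.le
  field_simp
  ring

lemma rho_continuous : Continuous rho := by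
  unfold rho
  exact continuous_const.mul ((Real.continuous_sqrt.comp (by fun_prop)).add
    ((continuous_const.sub Real.continuous_arccos).mul continuous_id))

lemma rho_monoOn : MonotoneOn rho (Set.Icc (-1 : ℝ) 1) := by
  have : StrictMonoOn rho (Set.Icc (-1 : ℝ) 1) := by
    apply StrictMonoOn.mono (s := Set.Icc (-1:ℝ) 1)
    · exact strictMonoOn_of_deriv_pos (convex_Icc _ _) rho_continuous.continuousOn
        (by
          intro r hr
          rw [interior_Icc] at hr
          rw [(rho_hasDerivAt hr.1 hr.2).deriv]
          have h1 : Real.arccos r < π := by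
            rcases lt_or_eq_of_le (Real.arccos_le_pi r) with h | h
            · exact h
            · exfalso; have := Real.arccos_eq_pi.mp h; linarith [hr.1]
          have hpi := Real.pi_pos
          have : (0:ℝ) < π - Real.arccos r := by linarith
          positivity)
    · exact le_refl _
  exact this.monotoneOn

lemma rho_mem {r : ℝ} (hr : r ∈ Set.Icc (-1 : ℝ) 1) : rho r ∈ Set.Icc (-1 : ℝ) 1 := by
  constructor
  · have := rho_monoOn (Set.left_mem_Icc.mpr (by norm_num)) hr hr.1
    rw [rho_neg_one] at this; linarith
  · have := rho_monoOn hr (Set.right_mem_Icc.mpr (by norm_num)) hr.2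
    rw [rho_one] at this; linarith

lemma rho_iter_one (ℓ : ℕ) : rho^[ℓ] (1 : ℝ) = 1 := by
  induction ℓ with
  | zero => rfl
  | succ n ih => rw [Function.iterate_succ_apply', ih, rho_one]

lemma rho_iter_mem {r : ℝ} (hr : r ∈ Set.Icc (-1 : ℝ) 1) (ℓ : ℕ) :
    rho^[ℓ] r ∈ Set.Icc (-1 : ℝ) 1 := by
  induction ℓ with
  | zero => exact hr
  | succ n ih => rw [Function.iterate_succ_apply']; exact rho_mem ih

lemma rho_iter_monoOn (ℓ : ℕ) {r s : ℝ} (hr : r ∈ Set.Icc (-1 : ℝ) 1)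
    (hs : s ∈ Set.Icc (-1 : ℝ) 1) (hrs : r ≤ s) : rho^[ℓ] r ≤ rho^[ℓ] s := by
  induction ℓ with
  | zero => exact hrs
  | succ n ih =>
    rw [Function.iterate_succ_apply', Function.iterate_succ_apply']
    exact rho_monoOn (rho_iter_mem hr n) (rho_iter_mem hs n) ih


lemma Kker_self {d : ℕ} (v : EuclideanSpace ℝ (Fin d)) (hv : v ≠ 0) :
    ∀ ℓ : ℕ, Kker (0 : ℝ) ℓ v v = ‖v‖ ^ 2 := by
  have hn : ‖v‖ ^ 2 ≠ 0 := pow_ne_zero _ (norm_ne_zero_iff.mpr hv)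
  intro ℓ
  induction ℓ with
  | zero => simpa [Kker] using real_inner_self_eq_norm_sq v
  | succ n ih =>
    have hsq : Real.sqrt (‖v‖ ^ 2 * ‖v‖ ^ 2) = ‖v‖ ^ 2 := by
      rw [Real.sqrt_mul_self (by positivity)]
    simp only [Kker, ih, hsq, div_self hn, rho_one]
    ring


/-- In the bias-free case `σ_b = 0`, for every `ℓ`,
`K^(ℓ)(x,x') = ‖x‖·‖x'‖·ρ^ℓ(⟪x,x'⟫/(‖x‖·‖x'‖))`; consequently
`‖x‖·‖x'‖·ρ^ℓ(−1) ≤ K^(ℓ)(x,x') ≤ ‖x‖·‖x'‖·ρ^ℓ(1) = ‖x‖·‖x'‖`. -/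
theorem Kker_no_bias_iterate {d : ℕ}
    (x x' : EuclideanSpace ℝ (Fin d)) (hx : x ≠ 0) (hx' : x' ≠ 0) :
    ∀ ℓ : ℕ,
      Kker (0 : ℝ) ℓ x x' =
          ‖x‖ * ‖x'‖ * rho^[ℓ] ((inner ℝ x x' : ℝ) / (‖x‖ * ‖x'‖)) ∧
      ‖x‖ * ‖x'‖ * rho^[ℓ] (-1) ≤ Kker (0 : ℝ) ℓ x x' ∧
      Kker (0 : ℝ) ℓ x x' ≤ ‖x‖ * ‖x'‖ * rho^[ℓ] 1 ∧
      ‖x‖ * ‖x'‖ * rho^[ℓ] (1 : ℝ) = ‖x‖ * ‖x'‖ := by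
  have ha : (0:ℝ) < ‖x‖ := norm_pos_iff.mpr hx
  have hb : (0:ℝ) < ‖x'‖ := norm_pos_iff.mpr hx'
  have hab : (0:ℝ) < ‖x‖ * ‖x'‖ := mul_pos ha hb
  set r₀ : ℝ := (inner ℝ x x' : ℝ) / (‖x‖ * ‖x'‖) with hr₀
  have hr₀mem : r₀ ∈ Set.Icc (-1:ℝ) 1 := by
    have hcs : |(inner ℝ x x' : ℝ)| ≤ ‖x‖ * ‖x'‖ := abs_real_inner_le_norm x x'
    have : |r₀| ≤ 1 := by
      rw [hr₀, abs_div, abs_of_pos hab]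
      exact div_le_one_of_le₀ hcs hab.le
    exact abs_le.mp this
  have hform : ∀ ℓ : ℕ, Kker (0 : ℝ) ℓ x x' = ‖x‖ * ‖x'‖ * rho^[ℓ] r₀ := by
    intro ℓ
    induction ℓ with
    | zero =>
      simp only [Kker, Function.iterate_zero, id_eq, hr₀]
      field_simp
    | succ n ih =>
      have hsq : Real.sqrt (‖x‖ ^ 2 * ‖x'‖ ^ 2) = ‖x‖ * ‖x'‖ := by
        rw [← mul_pow, Real.sqrt_sq hab.le]
      simp only [Kker, Kker_self x hx, Kker_self x' hx', hsq, ih,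
        mul_div_cancel_left₀ _ (ne_of_gt hab), Function.iterate_succ_apply']
      ring
  intro ℓ
  refine ⟨hform ℓ, ?_, ?_, ?_⟩
  · rw [hform ℓ]
    exact mul_le_mul_of_nonneg_left
      (rho_iter_monoOn ℓ (Set.left_mem_Icc.mpr (by norm_num)) hr₀mem hr₀mem.1) hab.le
  · rw [hform ℓ]
    exact mul_le_mul_of_nonneg_left
      (rho_iter_monoOn ℓ hr₀mem (Set.right_mem_Icc.mpr (by norm_num)) hr₀mem.2) hab.le
  · rw [rho_iter_one, mul_one]
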